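/- Let $\{\varepsilon_n\}_{n\ge 0}$ be a sequence of positive real numbers satisfying $\varepsilon_n \le \frac{1}{2}(\varepsilon_{n-1}\wedge \varepsilon_{n-1}^2) + C_1 \eta_0^{2^n}$ for all $n\ge 1$, where $0\le \eta_0 < 1$ and $C_1 > 0$. Then there exist constants $0\le \eta_1 < 1$ and $C_2 > 0$, depending only on $\eta_0$, $C_1$, and $\varepsilon_0$, such that $\varepsilon_n \le C_2 \eta_1^{2^n}$ for all $n$. -/

import Mathlib

set_option maxHeartbeats 1600000 in
theorem stmt_0 (ε : ℕ → ℝ) (C1 η0 : ℝ)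
    (hε : ∀ n, 0 < ε n) (hη0 : 0 ≤ η0) (hη1 : η0 < 1) (hC1 : 0 < C1)
    (hrec : ∀ n : ℕ, 1 ≤ n →
      ε n ≤ (1/2) * min (ε (n-1)) ((ε (n-1))^2) + C1 * η0 ^ (2^n)) :
    ∃ η1 C2 : ℝ, 0 ≤ η1 ∧ η1 < 1 ∧ 0 < C2 ∧ ∀ n, ε n ≤ C2 * η1 ^ (2^n) := by
  set r : ℝ := max η0 (2/3) with hrdef
  have hr23 : (2:ℝ)/3 ≤ r := le_max_right _ _
  have hr0 : (0:ℝ) ≤ r := by linarith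
  have hrlt : r < 1 := max_lt hη1 (by norm_num)
  have hη0r : η0 ≤ r := le_max_left _ _
  set A : ℝ := ε 0 + 4*C1 with hAdef
  have hε00 := hε 0
  have hApos : 0 < A := by rw [hAdef]; linarith
  have hpow : ∀ n : ℕ, η0 ^ (2^n) ≤ r ^ n := by
    intro n
    calc η0 ^ (2^n) ≤ η0 ^ n :=
          pow_le_pow_of_le_one hη0 hη1.le (Nat.le_of_lt (Nat.lt_two_pow_self (n := n)))
      _ ≤ r ^ n := pow_le_pow_left₀ hη0 hη0r n
  have hkey : A/2 + C1 * r ≤ A * r := by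
    have h1 : (0:ℝ) ≤ A - C1 := by rw [hAdef]; linarith
    nlinarith [mul_le_mul_of_nonneg_left hr23 h1]
  have hbound : ∀ n, ε n ≤ A * r ^ n := by
    intro n
    induction n with
    | zero => simp [hAdef]; linarith
    | succ n ih =>
      have h1 := hrec (n+1) (by omega)
      simp only [Nat.add_sub_cancel] at h1
      have h2 : min (ε n) ((ε n)^2) ≤ ε n := min_le_left _ _
      have h3 : η0 ^ (2^(n+1)) ≤ r^(n+1) := hpow (n+1)
      have hpn : (0:ℝ) ≤ r ^ n := pow_nonneg hr0 n
      calc ε (n+1) ≤ (1/2)*(ε n) + C1 * r^(n+1) := by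
            nlinarith [mul_le_mul_of_nonneg_left h3 hC1.le]
        _ ≤ (1/2)*(A * r^n) + C1 * r^(n+1) := by
            have := mul_le_mul_of_nonneg_left ih (by norm_num : (0:ℝ) ≤ 1/2)
            linarith
        _ ≤ A * r^(n+1) := by
            rw [pow_succ]
            nlinarith [mul_le_mul_of_nonneg_right hkey hpn]
  -- choose N
  have ht0 : (0:ℝ) < min (1/2) (1/(2*(C1+1))) := by
    apply lt_min (by norm_num); positivity
  obtain ⟨N1, hN1⟩ := exists_pow_lt_of_lt_one (show (0:ℝ) < 1/(2*A) by positivity) hrlt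
  obtain ⟨N2, hN2⟩ := exists_pow_lt_of_lt_one ht0 hη1
  obtain ⟨N, hrN, hbt⟩ : ∃ N : ℕ, A * r ^ N ≤ 1/2 ∧
      η0 ^ (2^N) ≤ min (1/2) (1/(2*(C1+1))) := by
    refine ⟨max N1 N2, ?_, ?_⟩
    · have h1 : r ^ (max N1 N2) ≤ r ^ N1 :=
        pow_le_pow_of_le_one hr0 hrlt.le (le_max_left _ _)
      have h2 : A * r ^ N1 < A * (1/(2*A)) :=
        (mul_lt_mul_iff_right₀ hApos).mpr hN1
      have h3 : A * (1/(2*A)) = 1/2 := by field_simp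
      nlinarith
    · have h1 : η0 ^ (2^(max N1 N2)) ≤ η0 ^ N2 := by
        apply pow_le_pow_of_le_one hη0 hη1.le
        exact le_trans (le_max_right _ _) (Nat.le_of_lt Nat.lt_two_pow_self)
      exact le_trans h1 hN2.le
  set b : ℝ := η0 ^ (2^N) with hbdef
  have hb0 : (0:ℝ) ≤ b := pow_nonneg hη0 _
  have hb_half : b ≤ 2⁻¹ := by
    have := le_trans hbt (min_le_left _ _); linarith
  have hbC : b ≤ 1/(2*(C1+1)) := le_trans hbt (min_le_right _ _)
  have hCb : C1 * b^2 ≤ 1/8 := by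
    have hpos : (0:ℝ) < 2*(C1+1) := by linarith
    have h1 : b * (2*(C1+1)) ≤ 1 := by
      rw [← le_div_iff₀ hpos]; exact hbC
    have h2 : (b*(2*(C1+1)))^2 ≤ 1 := by
      nlinarith [mul_nonneg hb0 hpos.le]
    nlinarith [sq_nonneg (C1*b), sq_nonneg b]
  -- tail decay
  have htail : ∀ m, ε (N + m) ≤ (2⁻¹:ℝ) ^ (2^m) := by
    intro m
    induction m with
    | zero =>
      have h0 : (2⁻¹:ℝ) ^ (2^(0:ℕ)) = 2⁻¹ := by norm_num
      rw [Nat.add_zero, h0, show (2⁻¹:ℝ) = 1/2 from by norm_num]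
      exact (hbound N).trans hrN
    | succ m ih =>
      have h1 := hrec (N + (m+1)) (by omega)
      rw [show N + (m+1) - 1 = N + m from by omega] at h1
      have hmin : min (ε (N+m)) ((ε (N+m))^2) ≤ (ε (N+m))^2 := min_le_right _ _
      have hsq : (ε (N+m))^2 ≤ ((2⁻¹:ℝ)^(2^m))^2 :=
        pow_le_pow_left₀ (hε (N+m)).le ih 2
      have hsq' : ((2⁻¹:ℝ)^(2^m))^2 = (2⁻¹:ℝ)^(2^(m+1)) := by
        rw [← pow_mul, ← pow_succ]
      have hη : η0 ^ (2^(N+(m+1))) = b ^ (2^(m+1)) := by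
        rw [hbdef, ← pow_mul, ← pow_add]
      have h2m : 1 ≤ 2^m := Nat.one_le_two_pow
      have hk2 : 2 ≤ 2^(m+1) := by rw [pow_succ]; omega
      have hCbk : C1 * b^(2^(m+1)) ≤ (2⁻¹:ℝ)^(2^(m+1)+1) := by
        have hsplit : b^(2^(m+1)) = b^2 * b^(2^(m+1)-2) := by
          rw [← pow_add]; congr 1; omega
        have hbk : b^(2^(m+1)-2) ≤ (2⁻¹:ℝ)^(2^(m+1)-2) :=
          pow_le_pow_left₀ hb0 hb_half _
        calc C1 * b^(2^(m+1)) = (C1*b^2) * b^(2^(m+1)-2) := by rw [hsplit]; ring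
          _ ≤ (1/8) * (2⁻¹:ℝ)^(2^(m+1)-2) := by
              apply mul_le_mul hCb hbk (pow_nonneg hb0 _) (by norm_num)
          _ = (2⁻¹:ℝ)^(2^(m+1)+1) := by
              rw [show (1/8:ℝ) = (2⁻¹)^3 by norm_num, ← pow_add]
              congr 1; omega
      have hps : (2⁻¹:ℝ)^(2^(m+1)+1) = (2⁻¹:ℝ)^(2^(m+1)) * 2⁻¹ := pow_succ _ _
      calc ε (N+(m+1)) ≤ (1/2) * ((ε (N+m))^2) + C1 * η0 ^ (2^(N+(m+1))) := by
            linarith [h1, hmin]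
        _ ≤ (1/2) * ((2⁻¹:ℝ)^(2^(m+1))) + (2⁻¹:ℝ)^(2^(m+1)+1) := by
            rw [hη]
            linarith [hsq.trans_eq hsq', hCbk]
        _ = (2⁻¹:ℝ)^(2^(m+1)) := by rw [hps]; ring
  -- conclude
  refine ⟨(2⁻¹:ℝ) ^ (((2:ℝ)^N)⁻¹), max 1 (2*A), Real.rpow_nonneg (by norm_num) _,
    Real.rpow_lt_one (by norm_num) (by norm_num) (by positivity),
    lt_of_lt_of_le one_pos (le_max_left _ _), ?_⟩
  intro n
  have hC2nn : (0:ℝ) ≤ max 1 (2*A) := le_trans zero_le_one (le_max_left _ _)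
  have hcalc : ((2⁻¹:ℝ) ^ (((2:ℝ)^N)⁻¹)) ^ (2^n : ℕ) =
      (2⁻¹:ℝ) ^ ((2^n : ℝ) / (2^N : ℝ)) := by
    rw [← Real.rpow_natCast ((2⁻¹:ℝ) ^ (((2:ℝ)^N)⁻¹)) (2^n),
      ← Real.rpow_mul (by norm_num)]
    congr 1
    push_cast
    ring
  rcases le_or_gt N n with h | h
  · have heq : (2^n : ℝ) / (2^N : ℝ) = ((2^(n-N) : ℕ) : ℝ) := by
      push_cast
      rw [div_eq_iff (by positivity : ((2:ℝ)^N) ≠ 0), ← pow_add]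
      congr 1; omega
    have hval : ((2⁻¹:ℝ) ^ (((2:ℝ)^N)⁻¹)) ^ (2^n:ℕ) = (2⁻¹:ℝ)^(2^(n-N):ℕ) := by
      rw [hcalc, heq, Real.rpow_natCast]
    rw [hval]
    have htn := htail (n - N)
    rw [show N + (n-N) = n from by omega] at htn
    calc ε n ≤ (2⁻¹:ℝ)^(2^(n-N)) := htn
      _ ≤ max 1 (2*A) * (2⁻¹:ℝ)^(2^(n-N)) :=
          le_mul_of_one_le_left (by positivity) (le_max_left _ _)
  · have hexp : (2^n : ℝ)/(2^N : ℝ) ≤ 1 := by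
      rw [div_le_one (by positivity)]
      exact pow_le_pow_right₀ (by norm_num) h.le
    have hlow : (2⁻¹:ℝ) ≤ (2⁻¹:ℝ) ^ ((2^n:ℝ)/(2^N:ℝ)) := by
      calc (2⁻¹:ℝ) = (2⁻¹:ℝ) ^ (1:ℝ) := (Real.rpow_one _).symm
        _ ≤ _ := Real.rpow_le_rpow_of_exponent_ge (by norm_num) (by norm_num) hexp
    rw [hcalc]
    have h1 : ε n ≤ A := by
      have := hbound n
      nlinarith [pow_le_one₀ hr0 hrlt.le (n := n), hApos]
    calc ε n ≤ A := h1
      _ = (2*A) * 2⁻¹ := by ring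
      _ ≤ max 1 (2*A) * (2⁻¹:ℝ)^((2^n:ℝ)/(2^N:ℝ)) :=
          mul_le_mul (le_max_right _ _) hlow (by norm_num) hC2nn
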